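/- Suppose g : ℝ^n → ℝ^N is C¹, f : ℝ^n × ℝ^p → ℝ^n, U is convex with 0 ∈ U, and there exists a matrix A ∈ ℝ^{N×N} with g(f(x,0)) = A g(x) for all x (i.e. span of the components of g is invariant under the Koopman operator of the drift f(·,0) with matrix representation A). Define ℬ(x,u) = (∫₀¹ Dg(f(x,0)+λ(f(x,u)−f(x,0))) dλ)(f(x,u)−f(x,0)) and assume ℬ(x,·) is C¹ with ℬ(x,0)=0. Then for all x and u ∈ U, g(f(x,u)) = A g(x) + B̂(x,u) u, where B̂(x,u) = ∫₀¹ (∂ℬ/∂u)(x, λu) dλ. -/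

import Mathlib

open Matrix

/-- FTC along a line segment for a C¹ function. -/
lemma ftc_line {E F : Type*} [NormedAddCommGroup E] [NormedSpace ℝ E]
    [NormedAddCommGroup F] [NormedSpace ℝ F] [CompleteSpace F]
    (h : E → F) (hh : ContDiff ℝ 1 h) (a b : E) :
    ∫ l in (0:ℝ)..1, fderiv ℝ h (a + l • (b - a)) (b - a) = h b - h a := by
  have hγ : ∀ l : ℝ, HasDerivAt (fun l : ℝ => a + l • (b - a)) (b - a) l := by
    intro l
    simpa using ((hasDerivAt_id l).smul_const (b - a)).const_add a
  have hderiv : ∀ l ∈ Set.uIcc (0:ℝ) 1,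
      HasDerivAt (fun l : ℝ => h (a + l • (b - a)))
        (fderiv ℝ h (a + l • (b - a)) (b - a)) l := by
    intro l _
    exact ((hh.differentiable one_ne_zero (a + l • (b - a))).hasFDerivAt).comp_hasDerivAt l (hγ l)
  have hcont : Continuous fun l : ℝ => fderiv ℝ h (a + l • (b - a)) (b - a) := by
    exact ((hh.continuous_fderiv one_ne_zero).comp (by continuity)).clm_apply continuous_const
  have := intervalIntegral.integral_eq_sub_of_hasDerivAt hderiv
    (hcont.intervalIntegrable 0 1)
  simpa using this

/-- Koopman form: if `g` is C¹, the span of the components of `g` is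
invariant under the Koopman operator of the drift `f(·,0)` with matrix representation
`A` (i.e. `g(f(x,0)) = A g(x)`), `U` is convex with `0 ∈ U`, and
`ℬ(x,u) = (∫₀¹ Dg(f(x,0)+λ(f(x,u)−f(x,0))) dλ)(f(x,u)−f(x,0))` is C¹ in `u` with
`ℬ(x,0) = 0`, then `g(f(x,u)) = A g(x) + B̂(x,u) u` where
`B̂(x,u) u = ∫₀¹ (∂ℬ/∂u)(x,λu) u dλ`. -/
theorem koopman_form
    {n p N : ℕ} (U : Set (Fin p → ℝ))
    (hUconv : Convex ℝ U) (hU0 : (0 : Fin p → ℝ) ∈ U)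
    (g : (Fin n → ℝ) → (Fin N → ℝ)) (hg : ContDiff ℝ 1 g)
    (f : (Fin n → ℝ) → (Fin p → ℝ) → (Fin n → ℝ))
    (A : Matrix (Fin N) (Fin N) ℝ)
    (hA : ∀ x : Fin n → ℝ, g (f x 0) = A.mulVec (g x))
    (B : (Fin n → ℝ) → (Fin p → ℝ) → (Fin N → ℝ))
    (hB : ∀ x u, B x u =
      ∫ l in (0:ℝ)..1,
        fderiv ℝ g (f x 0 + l • (f x u - f x 0)) (f x u - f x 0))
    (hBdiff : ∀ x, ContDiff ℝ 1 (B x))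
    (hB0 : ∀ x, B x 0 = 0) :
    ∀ (x : Fin n → ℝ), ∀ u ∈ U,
      g (f x u) = A.mulVec (g x) + ∫ l in (0:ℝ)..1, fderiv ℝ (B x) (l • u) u := by
  intro x u _
  have h1 : B x u = g (f x u) - g (f x 0) := by
    rw [hB x u, ftc_line g hg (f x 0) (f x u)]
  have h2 : (∫ l in (0:ℝ)..1, fderiv ℝ (B x) (l • u) u) = B x u - B x 0 := by
    have := ftc_line (B x) (hBdiff x) 0 u
    simpa using this
  rw [h2, hB0, h1, hA]
  abel
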